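/- Let p and q be positive integers, let f : ℝ → ℝ be defined by f(x) = (1/2) * log(sinh(x/2)/(x/2)), let f' denote its derivative on ℝ \ {0}, and set c'(x) = p*f'(p*x) + q*f'(q*x) - p*q*f'(p*q*x). Write coth(u) = cosh(u)/sinh(u). Then for all nonzero real numbers x and y: (1/2)*( f'(p*y)*f'(q*x) + f'(p*x)*f'(q*y) - c'(x)*f'(p*q*y) - c'(y)*f'(p*q*x) ) = (1/32)*( 2*p*q*coth(p*q*x/2)*coth(p*q*y/2) - p*coth(p*x/2)*coth(p*q*y/2) - q*coth(q*x/2)*coth(p*q*y/2) - p*coth(p*q*x/2)*coth(p*y/2) - q*coth(p*q*x/2)*coth(q*y/2) + coth(p*x/2)*coth(q*y/2) + coth(q*x/2)*coth(p*y/2) ). -/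

import Mathlib

open Real

/-- Closed form for the derivative of `f x = (1/2) log (sinh(x/2)/(x/2))` away from 0. -/
lemma torus_knot_fderiv_eq (f f' : ℝ → ℝ)
    (hf : ∀ x : ℝ, f x = (1 / 2) * Real.log (Real.sinh (x / 2) / (x / 2)))
    (hf' : ∀ x : ℝ, x ≠ 0 → HasDerivAt f (f' x) x) :
    ∀ x : ℝ, x ≠ 0 →
      f' x = (1 / 4) * (Real.cosh (x / 2) / Real.sinh (x / 2)) - 1 / (2 * x) := by
  intro x hx
  have hsx : Real.sinh (x / 2) ≠ 0 := by
    simp [Real.sinh_eq_zero, hx]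
  have h1 : HasDerivAt (fun z : ℝ => Real.sinh (z / 2)) (Real.cosh (x / 2) * (1 / 2)) x := by
    have := (Real.hasDerivAt_sinh (x / 2)).comp x ((hasDerivAt_id x).div_const 2)
    simpa [Function.comp_def] using this
  have h2 : HasDerivAt (fun z : ℝ => Real.log (Real.sinh (z / 2)))
      ((Real.cosh (x / 2) * (1 / 2)) / Real.sinh (x / 2)) x := h1.log hsx
  have h3 : HasDerivAt (fun z : ℝ => Real.log (z / 2)) ((1 / 2) / (x / 2)) x := by
    have hx2 : x / 2 ≠ 0 := by simpa using hx
    have := ((hasDerivAt_id x).div_const 2).log hx2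
    simpa using this
  have hg : HasDerivAt
      (fun z : ℝ => (1 / 2) * (Real.log (Real.sinh (z / 2)) - Real.log (z / 2)))
      ((1 / 2) * ((Real.cosh (x / 2) * (1 / 2)) / Real.sinh (x / 2) - (1 / 2) / (x / 2))) x :=
    (h2.sub h3).const_mul (1 / 2)
  have heq : f =ᶠ[nhds x] fun z : ℝ =>
      (1 / 2) * (Real.log (Real.sinh (z / 2)) - Real.log (z / 2)) := by
    have hmem : {z : ℝ | z ≠ 0} ∈ nhds x := isOpen_ne.mem_nhds hx
    filter_upwards [hmem] with z hz
    have hsz : Real.sinh (z / 2) ≠ 0 := by simp [Real.sinh_eq_zero, hz]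
    have hz2 : z / 2 ≠ 0 := by simpa using hz
    rw [hf z, Real.log_div hsz hz2]
  have hfd : HasDerivAt f
      ((1 / 2) * ((Real.cosh (x / 2) * (1 / 2)) / Real.sinh (x / 2) - (1 / 2) / (x / 2))) x :=
    hg.congr_of_eventuallyEq heq
  have := (hf' x hx).unique hfd
  rw [this]
  field_simp
  ring

/-- The purely algebraic identity, with the coth values as free variables. -/
lemma torus_knot_alg (p q x y A B C A' B' C' : ℝ)
    (hp : p ≠ 0) (hq : q ≠ 0) (hx : x ≠ 0) (hy : y ≠ 0) :
    (1 / 2) * (((1/4) * A' - 1/(2*(p*y))) * ((1/4) * B - 1/(2*(q*x)))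
        + ((1/4) * A - 1/(2*(p*x))) * ((1/4) * B' - 1/(2*(q*y)))
        - (p * ((1/4) * A - 1/(2*(p*x))) + q * ((1/4) * B - 1/(2*(q*x)))
            - p * q * ((1/4) * C - 1/(2*(p*q*x)))) * ((1/4) * C' - 1/(2*(p*q*y)))
        - (p * ((1/4) * A' - 1/(2*(p*y))) + q * ((1/4) * B' - 1/(2*(q*y)))
            - p * q * ((1/4) * C' - 1/(2*(p*q*y)))) * ((1/4) * C - 1/(2*(p*q*x)))) =
      (1 / 32) * (2 * p * q * C * C' - p * A * C' - q * B * C'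
        - p * C * A' - q * C * B' + A * B' + B * A') := by
  field_simp
  ring

theorem torus_knot_two_loop_symmetrized (p q : ℕ) (hp : 0 < p) (hq : 0 < q)
    (f f' c' coth : ℝ → ℝ)
    (hf : ∀ x : ℝ, f x = (1 / 2) * Real.log (Real.sinh (x / 2) / (x / 2)))
    (hf' : ∀ x : ℝ, x ≠ 0 → HasDerivAt f (f' x) x)
    (hc' : ∀ x : ℝ, c' x = (p : ℝ) * f' ((p : ℝ) * x) + (q : ℝ) * f' ((q : ℝ) * x) -
        (p : ℝ) * q * f' ((p : ℝ) * q * x))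
    (hcoth : ∀ u : ℝ, coth u = Real.cosh u / Real.sinh u) :
    ∀ x y : ℝ, x ≠ 0 → y ≠ 0 →
      (1 / 2) * (f' ((p : ℝ) * y) * f' ((q : ℝ) * x) + f' ((p : ℝ) * x) * f' ((q : ℝ) * y)
          - c' x * f' ((p : ℝ) * q * y) - c' y * f' ((p : ℝ) * q * x)) =
        (1 / 32) *
          (2 * (p : ℝ) * q * coth ((p : ℝ) * q * x / 2) * coth ((p : ℝ) * q * y / 2)
            - (p : ℝ) * coth ((p : ℝ) * x / 2) * coth ((p : ℝ) * q * y / 2)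
            - (q : ℝ) * coth ((q : ℝ) * x / 2) * coth ((p : ℝ) * q * y / 2)
            - (p : ℝ) * coth ((p : ℝ) * q * x / 2) * coth ((p : ℝ) * y / 2)
            - (q : ℝ) * coth ((p : ℝ) * q * x / 2) * coth ((q : ℝ) * y / 2)
            + coth ((p : ℝ) * x / 2) * coth ((q : ℝ) * y / 2)
            + coth ((q : ℝ) * x / 2) * coth ((p : ℝ) * y / 2)) := by
  intro x y hx hy
  have key := torus_knot_fderiv_eq f f' hf hf'
  have hp' : (p : ℝ) ≠ 0 := Nat.cast_ne_zero.mpr hp.ne'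
  have hq' : (q : ℝ) ≠ 0 := Nat.cast_ne_zero.mpr hq.ne'
  have hpx : (p : ℝ) * x ≠ 0 := mul_ne_zero hp' hx
  have hqx : (q : ℝ) * x ≠ 0 := mul_ne_zero hq' hx
  have hpqx : (p : ℝ) * q * x ≠ 0 := mul_ne_zero (mul_ne_zero hp' hq') hx
  have hpy : (p : ℝ) * y ≠ 0 := mul_ne_zero hp' hy
  have hqy : (q : ℝ) * y ≠ 0 := mul_ne_zero hq' hy
  have hpqy : (p : ℝ) * q * y ≠ 0 := mul_ne_zero (mul_ne_zero hp' hq') hy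
  rw [hc' x, hc' y, key _ hpx, key _ hqx, key _ hpqx, key _ hpy, key _ hqy, key _ hpqy,
    hcoth, hcoth, hcoth, hcoth, hcoth, hcoth]
  have := torus_knot_alg (p : ℝ) (q : ℝ) x y
    (Real.cosh ((p : ℝ) * x / 2) / Real.sinh ((p : ℝ) * x / 2))
    (Real.cosh ((q : ℝ) * x / 2) / Real.sinh ((q : ℝ) * x / 2))
    (Real.cosh ((p : ℝ) * q * x / 2) / Real.sinh ((p : ℝ) * q * x / 2))
    (Real.cosh ((p : ℝ) * y / 2) / Real.sinh ((p : ℝ) * y / 2))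
    (Real.cosh ((q : ℝ) * y / 2) / Real.sinh ((q : ℝ) * y / 2))
    (Real.cosh ((p : ℝ) * q * y / 2) / Real.sinh ((p : ℝ) * q * y / 2))
    hp' hq' hx hy
  linarith [this]
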